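/- Let X be a metric space written as a finite union X = A ∪ B₁ ∪ ... ∪ B_k of closed sets, and let F : X → Y be a map into a metric space such that the restriction of F to A and to each closure of B_i is L-Lipschitz, and the B_i are pairwise disjoint open sets with boundaries contained in A, and X is a geodesic metric space. Then F is L-Lipschitz on all of X. -/

import Mathlib

theorem lipschitz_gluing
    {X Y : Type*} [MetricSpace X] [MetricSpace Y]
    (hgeo : ∀ x y : X, ∃ γ : ℝ → X, γ 0 = x ∧ γ 1 = y ∧
      ∀ s ∈ Set.Icc (0:ℝ) 1, ∀ t ∈ Set.Icc (0:ℝ) 1, dist (γ s) (γ t) = |s - t| * dist x y)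
    (k : ℕ) (A : Set X) (B : Fin k → Set X)
    (hA : IsClosed A) (hBopen : ∀ i, IsOpen (B i))
    (hBdisj : ∀ i j, i ≠ j → Disjoint (B i) (B j))
    (hfront : ∀ i, frontier (B i) ⊆ A)
    (hcover : A ∪ ⋃ i, B i = Set.univ)
    (L : NNReal) (F : X → Y)
    (hFA : LipschitzOnWith L F A)
    (hFB : ∀ i, LipschitzOnWith L F (closure (B i))) :
    LipschitzWith L F := by
  -- F is continuous: glue along the finite closed cover A ∪ ⋃ closure (B i)
  have hFcont : Continuous F := by
    set s : Option (Fin k) → Set X := fun o => o.elim A (fun i => closure (B i)) with hs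
    have hlf : LocallyFinite s := locallyFinite_of_finite s
    have hcov : ⋃ o, s o = Set.univ := by
      apply Set.eq_univ_of_univ_subset
      rw [← hcover]
      rintro z (hz | hz)
      · exact Set.mem_iUnion.2 ⟨none, hz⟩
      · obtain ⟨i, hi⟩ := Set.mem_iUnion.1 hz
        exact Set.mem_iUnion.2 ⟨some i, subset_closure hi⟩
    refine hlf.continuous hcov ?_ ?_
    · rintro (_ | i)
      · exact hA
      · exact isClosed_closure
    · rintro (_ | i)
      · exact hFA.continuousOn
      · exact (hFB i).continuousOn
  rw [lipschitzWith_iff_dist_le_mul]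
  intro x y
  obtain ⟨γ, h0, h1, hiso⟩ := hgeo x y
  set d := dist x y with hd
  rcases eq_or_lt_of_le (dist_nonneg : (0:ℝ) ≤ d) with hd0 | hd0
  · have hxy : dist (γ 1) (γ 0) = 0 := by
      rw [hiso 1 (by norm_num) 0 (by norm_num), hd, ← hd0, mul_zero]
    rw [dist_eq_zero] at hxy
    rw [h0, h1] at hxy
    rw [hxy]
    simp [mul_nonneg L.coe_nonneg dist_nonneg]
    exact mul_nonneg L.coe_nonneg dist_nonneg
  -- the geodesic is Lipschitz on [0,1]
  have hγd : ∀ s ∈ Set.Icc (0:ℝ) 1, ∀ t ∈ Set.Icc (0:ℝ) 1, s ≤ t →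
      dist (γ s) (γ t) = (t - s) * d := by
    intro s hs t ht hst
    rw [hiso s hs t ht, abs_of_nonpos (by linarith), neg_sub]
  have hγcont : ContinuousOn γ (Set.Icc 0 1) := by
    rw [Metric.continuousOn_iff]
    intro b hb ε hε
    refine ⟨ε / d, by positivity, fun a ha hab => ?_⟩
    rw [hiso a ha b hb]
    rw [Real.dist_eq] at hab
    calc |a - b| * d < ε / d * d := by
          apply mul_lt_mul_of_pos_right hab hd0
      _ = ε := by field_simp; exact div_self (show d ≠ 0 from ne_of_gt hd0)
  set f : ℝ → Y := fun u => F (γ u) with hf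
  set T := {u ∈ Set.Icc (0:ℝ) 1 | dist (F x) (f u) ≤ L * u * d} with hT
  have h0T : (0:ℝ) ∈ T := by
    constructor
    · exact ⟨le_refl 0, zero_le_one⟩
    · simp [hf, h0]
  have hTbdd : BddAbove T := ⟨1, fun u hu => hu.1.2⟩
  have hTne : T.Nonempty := ⟨0, h0T⟩
  have hTclosed : IsClosed T := by
    apply IsClosed.isClosed_le isClosed_Icc
    · exact (continuous_const.dist hFcont).comp_continuousOn hγcont
    · exact ((continuous_const.mul continuous_id).mul continuous_const).continuousOn
  set c := sSup T with hc
  have hcT : c ∈ T := hTclosed.csSup_mem hTne hTbdd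
  have hc0 : 0 ≤ c := hcT.1.1
  have hc1 : c ≤ 1 := hcT.1.2
  -- key : 1 ∈ T
  have h1T : (1:ℝ) ∈ T := by
    rcases eq_or_lt_of_le hc1 with hceq | hclt
    · rw [← hceq]; exact hcT
    exfalso
    by_cases hBc : ∃ i, γ c ∈ B i
    · -- we can go a bit further inside B i, contradicting sup
      obtain ⟨i, hi⟩ := hBc
      obtain ⟨r, hr, hball⟩ := Metric.isOpen_iff.1 (hBopen i) _ hi
      set v := min (c + r / (2 * d)) 1 with hv
      have hdr : (0:ℝ) < r / (2 * d) := div_pos hr (by positivity)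
      have hvc : c < v := lt_min (by linarith) hclt
      have hv1 : v ≤ 1 := min_le_right _ _
      have hvIcc : v ∈ Set.Icc (0:ℝ) 1 := ⟨le_trans hc0 hvc.le, hv1⟩
      have hvd : v - c ≤ r / (2 * d) := by
        have := min_le_left (c + r / (2 * d)) 1
        linarith
      have hγv : γ v ∈ B i := by
        apply hball
        rw [Metric.mem_ball, dist_comm, hγd c hcT.1 v hvIcc hvc.le]
        calc (v - c) * d ≤ r / (2 * d) * d := by
              apply mul_le_mul_of_nonneg_right hvd hd0.le
          _ = r / 2 := by rw [div_mul_eq_mul_div, mul_div_mul_right _ _ (show d ≠ 0 from ne_of_gt hd0)]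
          _ < r := by linarith
      have hvT : v ∈ T := by
        refine ⟨hvIcc, ?_⟩
        calc dist (F x) (f v) ≤ dist (F x) (f c) + dist (f c) (f v) := dist_triangle _ _ _
          _ ≤ L * c * d + L * ((v - c) * d) := by
              gcongr
              · exact hcT.2
              · calc dist (f c) (f v) ≤ L * dist (γ c) (γ v) :=
                      (hFB i).dist_le_mul _ (subset_closure hi) _ (subset_closure hγv)
                  _ = L * ((v - c) * d) := by rw [hγd c hcT.1 v hvIcc hvc.le]
          _ = L * v * d := by ring
      exact absurd (le_csSup hTbdd hvT) (not_le.2 hvc)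
    · -- γ c ∈ A and not in any B i
      push_neg at hBc
      have hγcA : γ c ∈ A := by
        have := hcover.symm ▸ Set.mem_univ (γ c)
        rcases (hcover ▸ Set.mem_univ (γ c) : γ c ∈ A ∪ ⋃ i, B i) with h | h
        · exact h
        · obtain ⟨i, hi⟩ := Set.mem_iUnion.1 h; exact absurd hi (hBc i)
      -- show dist (f c) (f 1) ≤ L * (1 - c) * d, contradicting c < 1 being the sup
      have hkey : dist (f c) (f 1) ≤ L * ((1 - c) * d) := by
        by_cases hB1 : ∃ i, γ 1 ∈ B i
        · obtain ⟨i, hi1⟩ := hB1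
          set S := Set.Icc c 1 ∩ γ ⁻¹' closure (B i) with hS
          have hSsub : Set.Icc c 1 ⊆ Set.Icc (0:ℝ) 1 := Set.Icc_subset_Icc hc0 le_rfl
          have hScl : IsClosed S :=
            (hγcont.mono hSsub).preimage_isClosed_of_isClosed isClosed_Icc isClosed_closure
          have h1S : (1:ℝ) ∈ S := ⟨⟨hclt.le, le_rfl⟩, subset_closure hi1⟩
          have hSne : S.Nonempty := ⟨1, h1S⟩
          have hSbdd : BddBelow S := ⟨c, fun u hu => hu.1.1⟩
          set w := sInf S with hw
          have hwS : w ∈ S := hScl.csInf_mem hSne hSbdd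
          have hwc : c ≤ w := hwS.1.1
          have hw1 : w ≤ 1 := hwS.1.2
          have hwIcc : w ∈ Set.Icc (0:ℝ) 1 := ⟨le_trans hc0 hwc, hw1⟩
          have hwA : γ w ∈ A := by
            have hwB : γ w ∉ B i := by
              intro hwB
              have hwc' : c < w := lt_of_le_of_ne hwc
                (fun h => hBc i (by rw [h]; exact hwB))
              obtain ⟨r, hr, hball⟩ := Metric.isOpen_iff.1 (hBopen i) _ hwB
              set u := max c (w - r / (2 * d)) with hu
              have hdr : (0:ℝ) < r / (2 * d) := div_pos hr (by positivity)
              have huw : u < w := max_lt hwc' (by linarith)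
              have huc : c ≤ u := le_max_left _ _
              have huIcc : u ∈ Set.Icc (0:ℝ) 1 := ⟨le_trans hc0 huc, le_trans huw.le hw1⟩
              have hud : w - u ≤ r / (2 * d) := by
                have := le_max_right c (w - r / (2 * d))
                linarith
              have hγu : γ u ∈ B i := by
                apply hball
                rw [Metric.mem_ball, hγd u huIcc w hwIcc huw.le]
                calc (w - u) * d ≤ r / (2 * d) * d := by
                      apply mul_le_mul_of_nonneg_right hud hd0.le
                  _ = r / 2 := by rw [div_mul_eq_mul_div, mul_div_mul_right _ _ (show d ≠ 0 from ne_of_gt hd0)]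
                  _ < r := by linarith
              have huS : u ∈ S := ⟨⟨huc, le_trans huw.le hw1⟩, subset_closure hγu⟩
              exact absurd (csInf_le hSbdd huS) (not_le.2 huw)
            apply hfront i
            rw [frontier, (hBopen i).interior_eq]
            exact ⟨hwS.2, hwB⟩
          calc dist (f c) (f 1) ≤ dist (f c) (f w) + dist (f w) (f 1) := dist_triangle _ _ _
            _ ≤ L * ((w - c) * d) + L * ((1 - w) * d) := by
                gcongr
                · calc dist (f c) (f w) ≤ L * dist (γ c) (γ w) :=
                        hFA.dist_le_mul _ hγcA _ hwA
                    _ = L * ((w - c) * d) := by rw [hγd c hcT.1 w hwIcc hwc]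
                · calc dist (f w) (f 1) ≤ L * dist (γ w) (γ 1) :=
                        (hFB i).dist_le_mul _ hwS.2 _ (subset_closure hi1)
                    _ = L * ((1 - w) * d) := by
                        rw [hγd w hwIcc 1 ⟨zero_le_one, le_rfl⟩ hw1]
            _ = L * ((1 - c) * d) := by ring
        · push_neg at hB1
          have hγ1A : γ 1 ∈ A := by
            rcases (hcover ▸ Set.mem_univ (γ 1) : γ 1 ∈ A ∪ ⋃ i, B i) with h | h
            · exact h
            · obtain ⟨i, hi⟩ := Set.mem_iUnion.1 h; exact absurd hi (hB1 i)
          calc dist (f c) (f 1) ≤ L * dist (γ c) (γ 1) := hFA.dist_le_mul _ hγcA _ hγ1A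
            _ = L * ((1 - c) * d) := by rw [hγd c hcT.1 1 ⟨zero_le_one, le_rfl⟩ hc1]
      have h1T' : (1:ℝ) ∈ T := by
        refine ⟨⟨zero_le_one, le_rfl⟩, ?_⟩
        calc dist (F x) (f 1) ≤ dist (F x) (f c) + dist (f c) (f 1) := dist_triangle _ _ _
          _ ≤ L * c * d + L * ((1 - c) * d) := add_le_add hcT.2 hkey
          _ = L * 1 * d := by ring
      exact absurd (le_csSup hTbdd h1T') (not_le.2 hclt)
  calc dist (F x) (F y) = dist (F x) (f 1) := by rw [hf]; simp [h1]
    _ ≤ L * 1 * d := h1T.2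
    _ = L * d := by ring
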